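/- arXiv:2005.01032 — 2 statements merged into one kernel-verified Lean document; each statement's English description precedes it below -/
import Mathlib

section
/- Define a_k(t) = (1/2π)∫₀^{2π} cos(2ω₁ t sin(λ/2)) e^{ikλ} dλ for k ∈ ℤ. Then a_k satisfies ä_k(t) = ω₁²(a_{k+1}(t) - 2a_k(t) + a_{k-1}(t)) for all t, with a_0(0) = 1 and a_k(0) = 0 for k ≠ 0. -/
open MeasureTheory

/-- Fourier coefficient `a_k(t)` of `cos(2ω₁ t sin(λ/2))`. -/
noncomputable def acoef (ω₁ : ℝ) (k : ℤ) (t : ℝ) : ℂ :=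
  ((1 / (2 * Real.pi) : ℝ) : ℂ) * ∫ l in (0:ℝ)..(2 * Real.pi),
    (Real.cos (2 * ω₁ * t * Real.sin (l / 2)) : ℂ) * Complex.exp (Complex.I * k * l)

section aux

variable (ω₁ : ℝ) (k : ℤ)

/-- integrand of first derivative -/
noncomputable def G1 (t : ℝ) : ℂ :=
  ∫ l in (0:ℝ)..(2 * Real.pi),
    ((-(2 * ω₁ * Real.sin (l / 2)) * Real.sin (2 * ω₁ * t * Real.sin (l / 2)) : ℝ) : ℂ)
      * Complex.exp (Complex.I * k * l)

noncomputable def G2 (t : ℝ) : ℂ :=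
  ∫ l in (0:ℝ)..(2 * Real.pi),
    ((-(2 * ω₁ * Real.sin (l / 2))^2 * Real.cos (2 * ω₁ * t * Real.sin (l / 2)) : ℝ) : ℂ)
      * Complex.exp (Complex.I * k * l)

lemma cont0 (t : ℝ) : Continuous fun l : ℝ =>
    (Real.cos (2 * ω₁ * t * Real.sin (l / 2)) : ℂ) * Complex.exp (Complex.I * k * l) := by
  fun_prop

lemma cont1 (t : ℝ) : Continuous fun l : ℝ =>
    ((-(2 * ω₁ * Real.sin (l / 2)) * Real.sin (2 * ω₁ * t * Real.sin (l / 2)) : ℝ) : ℂ)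
      * Complex.exp (Complex.I * k * l) := by
  fun_prop

lemma cont2 (t : ℝ) : Continuous fun l : ℝ =>
    ((-(2 * ω₁ * Real.sin (l / 2))^2 * Real.cos (2 * ω₁ * t * Real.sin (l / 2)) : ℝ) : ℂ)
      * Complex.exp (Complex.I * k * l) := by
  fun_prop

lemma norm_exp_Ikl (l : ℝ) : ‖Complex.exp (Complex.I * k * l)‖ = 1 := by
  rw [Complex.norm_exp]
  simp [Complex.mul_re]

lemma hd_pointwise_1 (l t : ℝ) :
    HasDerivAt (fun s : ℝ => (Real.cos (2 * ω₁ * s * Real.sin (l / 2)) : ℂ)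
        * Complex.exp (Complex.I * k * l))
      (((-(2 * ω₁ * Real.sin (l / 2)) * Real.sin (2 * ω₁ * t * Real.sin (l / 2)) : ℝ) : ℂ)
        * Complex.exp (Complex.I * k * l)) t := by
  have hinner : HasDerivAt (fun s : ℝ => 2 * ω₁ * s * Real.sin (l / 2))
      (2 * ω₁ * Real.sin (l / 2)) t := by
    simpa using ((hasDerivAt_id t).const_mul (2 * ω₁)).mul_const (Real.sin (l / 2))
  have h : HasDerivAt (fun s : ℝ => Real.cos (2 * ω₁ * s * Real.sin (l / 2)))
      (-(2 * ω₁ * Real.sin (l / 2)) * Real.sin (2 * ω₁ * t * Real.sin (l / 2))) t := by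
    have := (Real.hasDerivAt_cos (2 * ω₁ * t * Real.sin (l / 2))).comp t hinner
    exact this.congr_deriv (by ring)
  exact h.ofReal_comp.mul_const _

lemma hd_pointwise_2 (l t : ℝ) :
    HasDerivAt (fun s : ℝ =>
        ((-(2 * ω₁ * Real.sin (l / 2)) * Real.sin (2 * ω₁ * s * Real.sin (l / 2)) : ℝ) : ℂ)
        * Complex.exp (Complex.I * k * l))
      (((-(2 * ω₁ * Real.sin (l / 2))^2 * Real.cos (2 * ω₁ * t * Real.sin (l / 2)) : ℝ) : ℂ)
        * Complex.exp (Complex.I * k * l)) t := by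
  have hinner : HasDerivAt (fun s : ℝ => 2 * ω₁ * s * Real.sin (l / 2))
      (2 * ω₁ * Real.sin (l / 2)) t := by
    simpa using ((hasDerivAt_id t).const_mul (2 * ω₁)).mul_const (Real.sin (l / 2))
  have h : HasDerivAt (fun s : ℝ =>
      -(2 * ω₁ * Real.sin (l / 2)) * Real.sin (2 * ω₁ * s * Real.sin (l / 2)))
      (-(2 * ω₁ * Real.sin (l / 2))^2 * Real.cos (2 * ω₁ * t * Real.sin (l / 2))) t := by
    have := (((Real.hasDerivAt_sin (2 * ω₁ * t * Real.sin (l / 2))).comp t hinner).const_mul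
      (-(2 * ω₁ * Real.sin (l / 2))))
    exact this.congr_deriv (by ring)
  exact h.ofReal_comp.mul_const _

lemma hasDerivAt_int1 (t : ℝ) :
    HasDerivAt (fun s => ∫ l in (0:ℝ)..(2 * Real.pi),
        (Real.cos (2 * ω₁ * s * Real.sin (l / 2)) : ℂ) * Complex.exp (Complex.I * k * l))
      (G1 ω₁ k t) t := by
  unfold G1
  refine (intervalIntegral.hasDerivAt_integral_of_dominated_loc_of_deriv_le (𝕜 := ℝ) (E := ℂ)
    (μ := volume) (a := 0) (b := 2 * Real.pi) (x₀ := t) (s := Metric.ball t 1)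
    (F := fun s l => (Real.cos (2 * ω₁ * s * Real.sin (l / 2)) : ℂ)
      * Complex.exp (Complex.I * k * l))
    (F' := fun s l => ((-(2 * ω₁ * Real.sin (l / 2))
        * Real.sin (2 * ω₁ * s * Real.sin (l / 2)) : ℝ) : ℂ)
      * Complex.exp (Complex.I * k * l))
    (bound := fun _ => 2 * |ω₁|) (Metric.ball_mem_nhds t one_pos) ?_ ?_ ?_ ?_ ?_ ?_).2
  · exact Filter.Eventually.of_forall fun s => ((cont0 ω₁ k s).aestronglyMeasurable)
  · exact ((cont0 ω₁ k t).intervalIntegrable (μ := volume) _ _)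
  · exact ((cont1 ω₁ k t).aestronglyMeasurable)
  · refine ae_of_all _ fun l _ x _ => ?_
    rw [norm_mul, norm_exp_Ikl, mul_one, Complex.norm_real, Real.norm_eq_abs, abs_mul]
    have hs : |Real.sin (l/2)| ≤ 1 := Real.abs_sin_le_one _
    have h1 : |(-(2 * ω₁ * Real.sin (l / 2)))| ≤ 2 * |ω₁| := by
      rw [abs_neg, abs_mul, abs_mul, abs_two]
      nlinarith [abs_nonneg ω₁, abs_nonneg (Real.sin (l/2))]
    have h2 : |Real.sin (2 * ω₁ * x * Real.sin (l / 2))| ≤ 1 := Real.abs_sin_le_one _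
    calc |(-(2 * ω₁ * Real.sin (l / 2)))| * |Real.sin (2 * ω₁ * x * Real.sin (l / 2))|
        ≤ (2 * |ω₁|) * 1 :=
          mul_le_mul h1 h2 (abs_nonneg _) (by positivity)
      _ = 2 * |ω₁| := mul_one _
  · exact intervalIntegrable_const
  · exact ae_of_all _ fun l _ x _ => hd_pointwise_1 ω₁ k l x

lemma hasDerivAt_int2 (t : ℝ) :
    HasDerivAt (fun s => G1 ω₁ k s) (G2 ω₁ k t) t := by
  unfold G1 G2
  refine (intervalIntegral.hasDerivAt_integral_of_dominated_loc_of_deriv_le (𝕜 := ℝ) (E := ℂ)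
    (μ := volume) (a := 0) (b := 2 * Real.pi) (x₀ := t) (s := Metric.ball t 1)
    (F := fun s l => ((-(2 * ω₁ * Real.sin (l / 2))
        * Real.sin (2 * ω₁ * s * Real.sin (l / 2)) : ℝ) : ℂ)
      * Complex.exp (Complex.I * k * l))
    (F' := fun s l => ((-(2 * ω₁ * Real.sin (l / 2))^2
        * Real.cos (2 * ω₁ * s * Real.sin (l / 2)) : ℝ) : ℂ)
      * Complex.exp (Complex.I * k * l))
    (bound := fun _ => (2 * |ω₁|)^2) (Metric.ball_mem_nhds t one_pos) ?_ ?_ ?_ ?_ ?_ ?_).2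
  · exact Filter.Eventually.of_forall fun s => ((cont1 ω₁ k s).aestronglyMeasurable)
  · exact ((cont1 ω₁ k t).intervalIntegrable (μ := volume) _ _)
  · exact ((cont2 ω₁ k t).aestronglyMeasurable)
  · refine ae_of_all _ fun l _ x _ => ?_
    rw [norm_mul, norm_exp_Ikl, mul_one, Complex.norm_real, Real.norm_eq_abs, abs_mul]
    have hs : |Real.sin (l/2)| ≤ 1 := Real.abs_sin_le_one _
    have h1 : |(-(2 * ω₁ * Real.sin (l / 2)) ^ 2)| ≤ (2 * |ω₁|)^2 := by
      rw [abs_neg, abs_pow, abs_mul, abs_mul, abs_two]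
      have h0 : (0:ℝ) ≤ 2 * |ω₁| := by positivity
      calc (2 * |ω₁| * |Real.sin (l / 2)|) ^ 2 ≤ (2 * |ω₁| * 1) ^ 2 := by
            apply pow_le_pow_left₀ (by positivity)
            nlinarith [abs_nonneg (Real.sin (l/2))]
        _ = (2 * |ω₁|) ^ 2 := by ring
    have h2 : |Real.cos (2 * ω₁ * x * Real.sin (l / 2))| ≤ 1 := Real.abs_cos_le_one _
    calc |(-(2 * ω₁ * Real.sin (l / 2)) ^ 2)| * |Real.cos (2 * ω₁ * x * Real.sin (l / 2))|
        ≤ (2 * |ω₁|)^2 * 1 := by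
          exact mul_le_mul h1 h2 (abs_nonneg _) (by positivity)
      _ = (2 * |ω₁|)^2 := mul_one _
  · exact intervalIntegrable_const
  · exact ae_of_all _ fun l _ x _ => hd_pointwise_2 ω₁ k l x

lemma cos_eq (l : ℝ) : Real.cos l = 1 - 2 * Real.sin (l / 2) ^ 2 := by
  have h1 := Real.cos_two_mul' (l / 2)
  have h2 := Real.sin_sq_add_cos_sq (l / 2)
  have : 2 * (l / 2) = l := by ring
  rw [this] at h1
  nlinarith

lemma exp_sum (l : ℝ) :
    Complex.exp (Complex.I * l) + Complex.exp (-(Complex.I * l)) =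
      2 * ((1 : ℂ) - 2 * (Real.sin (l / 2) : ℂ) ^ 2) := by
  have h1 : Complex.exp (Complex.I * l) = Complex.cos l + Complex.sin l * Complex.I := by
    rw [mul_comm, Complex.exp_mul_I]
  have h2 : Complex.exp (-(Complex.I * l)) = Complex.cos l - Complex.sin l * Complex.I := by
    have : -(Complex.I * (l : ℂ)) = (-(l : ℂ)) * Complex.I := by ring
    rw [this, Complex.exp_mul_I, Complex.cos_neg, Complex.sin_neg]; ring
  rw [h1, h2]
  have h3 : (Complex.cos l : ℂ) = ((Real.cos l : ℝ) : ℂ) := (Complex.ofReal_cos l).symm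
  have h4 : ((Real.cos l : ℝ) : ℂ) = 1 - 2 * (Real.sin (l / 2) : ℂ) ^ 2 := by
    rw [cos_eq l]; push_cast; ring
  rw [h3, h4]; ring

lemma integrand_identity (t l : ℝ) :
    ((-(2 * ω₁ * Real.sin (l / 2))^2 * Real.cos (2 * ω₁ * t * Real.sin (l / 2)) : ℝ) : ℂ)
        * Complex.exp (Complex.I * k * l) =
      ((ω₁:ℂ))^2 * ((Real.cos (2 * ω₁ * t * Real.sin (l / 2)) : ℂ)
          * Complex.exp (Complex.I * (k + 1 : ℤ) * l)
        - 2 * ((Real.cos (2 * ω₁ * t * Real.sin (l / 2)) : ℂ)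
          * Complex.exp (Complex.I * k * l))
        + (Real.cos (2 * ω₁ * t * Real.sin (l / 2)) : ℂ)
          * Complex.exp (Complex.I * (k - 1 : ℤ) * l)) := by
  have hk1 : Complex.exp (Complex.I * ((k : ℂ) + 1) * l) =
      Complex.exp (Complex.I * k * l) * Complex.exp (Complex.I * l) := by
    rw [← Complex.exp_add]; congr 1; ring
  have hk2 : Complex.exp (Complex.I * ((k : ℂ) - 1) * l) =
      Complex.exp (Complex.I * k * l) * Complex.exp (-(Complex.I * l)) := by
    rw [← Complex.exp_add]; congr 1; ring
  simp only [Int.cast_add, Int.cast_sub, Int.cast_one, Complex.ofReal_mul, Complex.ofReal_neg,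
    Complex.ofReal_pow, Complex.ofReal_ofNat]
  rw [hk1, hk2]
  have h := exp_sum l
  set E := Complex.exp (Complex.I * k * l)
  set C := (Real.cos (2 * ω₁ * t * Real.sin (l / 2)) : ℂ)
  set S := (Real.sin (l / 2) : ℂ)
  linear_combination (-(ω₁:ℂ)^2 * C * E) * h

lemma G2_eq (t : ℝ) :
    ((1 / (2 * Real.pi) : ℝ) : ℂ) * G2 ω₁ k t =
      (ω₁^2 : ℂ) * (acoef ω₁ (k+1) t - 2 * acoef ω₁ k t + acoef ω₁ (k-1) t) := by
  have hA := (cont0 ω₁ (k+1) t).intervalIntegrable (μ := volume) (0:ℝ) (2 * Real.pi)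
  have hB := (cont0 ω₁ k t).intervalIntegrable (μ := volume) (0:ℝ) (2 * Real.pi)
  have hC := (cont0 ω₁ (k-1) t).intervalIntegrable (μ := volume) (0:ℝ) (2 * Real.pi)
  have key : G2 ω₁ k t =
      (ω₁^2 : ℂ) * ((∫ l in (0:ℝ)..(2 * Real.pi),
          (Real.cos (2 * ω₁ * t * Real.sin (l / 2)) : ℂ) * Complex.exp (Complex.I * (k+1 : ℤ) * l))
        - 2 * (∫ l in (0:ℝ)..(2 * Real.pi),
          (Real.cos (2 * ω₁ * t * Real.sin (l / 2)) : ℂ) * Complex.exp (Complex.I * k * l))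
        + (∫ l in (0:ℝ)..(2 * Real.pi),
          (Real.cos (2 * ω₁ * t * Real.sin (l / 2)) : ℂ) * Complex.exp (Complex.I * (k-1 : ℤ) * l))) := by
    rw [G2]
    rw [show (∫ l in (0:ℝ)..(2 * Real.pi),
        ((-(2 * ω₁ * Real.sin (l / 2))^2 * Real.cos (2 * ω₁ * t * Real.sin (l / 2)) : ℝ) : ℂ)
          * Complex.exp (Complex.I * k * l)) =
      ∫ l in (0:ℝ)..(2 * Real.pi), ((ω₁:ℂ))^2 *
        ((Real.cos (2 * ω₁ * t * Real.sin (l / 2)) : ℂ) * Complex.exp (Complex.I * (k + 1 : ℤ) * l)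
        - 2 * ((Real.cos (2 * ω₁ * t * Real.sin (l / 2)) : ℂ) * Complex.exp (Complex.I * k * l))
        + (Real.cos (2 * ω₁ * t * Real.sin (l / 2)) : ℂ) * Complex.exp (Complex.I * (k - 1 : ℤ) * l))
      from intervalIntegral.integral_congr fun l _ => integrand_identity ω₁ k t l]
    rw [intervalIntegral.integral_const_mul]
    congr 1
    rw [intervalIntegral.integral_add (by exact (hA.sub (hB.const_mul 2))) hC,
      intervalIntegral.integral_sub hA (hB.const_mul 2),
      intervalIntegral.integral_const_mul]
  rw [key, acoef, acoef, acoef]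
  ring

end aux

theorem stmt1 (ω₁ : ℝ) (hω : 0 < ω₁) :
    (∀ k : ℤ, ∀ t : ℝ,
      deriv (deriv (fun s => acoef ω₁ k s)) t =
        (ω₁^2 : ℂ) * (acoef ω₁ (k+1) t - 2 * acoef ω₁ k t + acoef ω₁ (k-1) t)) ∧
    acoef ω₁ 0 0 = 1 ∧ (∀ k : ℤ, k ≠ 0 → acoef ω₁ k 0 = 0) := by
  refine ⟨fun k t => ?_, ?_, fun k hk => ?_⟩
  · have hstep : deriv (fun s => acoef ω₁ k s) =
        fun s => ((1 / (2 * Real.pi) : ℝ) : ℂ) * G1 ω₁ k s := by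
      funext s
      have : HasDerivAt (fun u => acoef ω₁ k u)
          (((1 / (2 * Real.pi) : ℝ) : ℂ) * G1 ω₁ k s) s := by
        simpa [acoef] using (hasDerivAt_int1 ω₁ k s).const_mul
          (((1 / (2 * Real.pi) : ℝ) : ℂ))
      exact this.deriv
    rw [hstep]
    have : HasDerivAt (fun s => ((1 / (2 * Real.pi) : ℝ) : ℂ) * G1 ω₁ k s)
        (((1 / (2 * Real.pi) : ℝ) : ℂ) * G2 ω₁ k t) t :=
      (hasDerivAt_int2 ω₁ k t).const_mul _
    rw [this.deriv]
    exact G2_eq ω₁ k t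
  · rw [acoef]
    simp only [Int.cast_zero, mul_zero, zero_mul, Real.cos_zero, Complex.ofReal_one,
      Complex.exp_zero, one_mul, mul_one, intervalIntegral.integral_const, sub_zero,
      smul_eq_mul]
    rw [Complex.real_smul, mul_one, ← Complex.ofReal_mul]
    have hp : (Real.pi : ℂ) ≠ 0 := Complex.ofReal_ne_zero.mpr Real.pi_ne_zero
    push_cast
    field_simp
  · rw [acoef]
    have hc : (Complex.I * (k : ℂ)) ≠ 0 := by
      simp [Complex.I_ne_zero, Complex.ext_iff]
      exact_mod_cast hk
    have : (∫ l in (0:ℝ)..(2 * Real.pi),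
        (Real.cos (2 * ω₁ * 0 * Real.sin (l / 2)) : ℂ) * Complex.exp (Complex.I * k * l)) =
        ∫ l in (0:ℝ)..(2 * Real.pi), Complex.exp ((Complex.I * (k : ℂ)) * l) := by
      refine intervalIntegral.integral_congr fun l _ => ?_
      simp [mul_assoc]
    rw [this, integral_exp_mul_complex hc]
    have : Complex.exp (Complex.I * (k : ℂ) * (2 * Real.pi : ℝ)) = 1 := by
      have := Complex.exp_int_mul_two_pi_mul_I k
      rw [← this]; congr 1; push_cast; ring
    rw [this]
    simp
end

section
/- Let V be the operator (Vq)_k = -ω₁²(q_{k+1}-2q_k+q_{k-1}) on l^∞(ℤ) and C(t) = cos(t√V) defined by the power series Σ_{k≥0}(-1)^k t^{2k}V^k/(2k)!. Then there exists b > 0 such that for all t ≥ 0, ‖C(t)‖_{op} ≤ b√t + 1. -/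
open MeasureTheory Real Finset intervalIntegral

set_option maxHeartbeats 2000000
set_option synthInstance.maxHeartbeats 1000000

noncomputable section

namespace Stmt11

def aker (ω₁ : ℝ) : ℕ → ℤ → ℝ
  | 0 => fun j => if j = 0 then 1 else 0
  | (k+1) => fun j => -ω₁^2 * (aker ω₁ k (j+1) - 2 * aker ω₁ k j + aker ω₁ k (j-1))

lemma aker_succ (ω₁ : ℝ) (k : ℕ) (j : ℤ) :
    aker ω₁ (k+1) j = -ω₁^2 * (aker ω₁ k (j+1) - 2 * aker ω₁ k j + aker ω₁ k (j-1)) := rfl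

lemma aker_eq_zero (ω₁ : ℝ) : ∀ (k : ℕ) (j : ℤ), k < j.natAbs → aker ω₁ k j = 0
  | 0, j, h => by
      have : j ≠ 0 := by omega
      simp [aker, this]
  | (k+1), j, h => by
      rw [aker_succ, aker_eq_zero ω₁ k (j+1) (by omega), aker_eq_zero ω₁ k j (by omega),
        aker_eq_zero ω₁ k (j-1) (by omega)]
      ring

lemma integral_cos_int (j : ℤ) :
    ∫ θ in (0:ℝ)..(2*π), Real.cos (j*θ) = if j = 0 then 2*π else 0 := by
  rcases eq_or_ne j 0 with h | h
  · simp [h]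
  · have hj : (j:ℝ) ≠ 0 := Int.cast_ne_zero.2 h
    rw [if_neg h]
    have := intervalIntegral.integral_comp_mul_left (a := (0:ℝ)) (b := 2*π) Real.cos hj
    rw [this]
    have h1 : Real.sin ((j:ℝ) * (2*π)) = 0 := by
      have := Real.sin_int_mul_pi (2*j)
      rw [show ((2*j : ℤ) : ℝ) * π = (j:ℝ) * (2*π) by push_cast; ring] at this
      exact this
    simp [integral_cos, h1]

lemma orth (j k : ℤ) : ∫ θ in (0:ℝ)..(2*π), Real.cos (j*θ) * Real.cos (k*θ)
    = π * ((if j = k then 1 else 0) + (if j = -k then 1 else 0)) := by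
  have hpt : ∀ θ : ℝ, Real.cos (j*θ) * Real.cos (k*θ)
      = (Real.cos (((j-k : ℤ) : ℝ) * θ) + Real.cos (((j+k : ℤ) : ℝ) * θ))/2 := by
    intro θ
    push_cast
    rw [sub_mul, add_mul, Real.cos_sub, Real.cos_add]
    ring
  rw [intervalIntegral.integral_congr (g := fun θ => (Real.cos (((j-k : ℤ) : ℝ) * θ) + Real.cos (((j+k : ℤ) : ℝ) * θ))/2) (fun θ _ => hpt θ)]
  have c1 : Continuous fun θ : ℝ => Real.cos (((j-k : ℤ) : ℝ) * θ) := by fun_prop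
  have c2 : Continuous fun θ : ℝ => Real.cos (((j+k : ℤ) : ℝ) * θ) := by fun_prop
  rw [intervalIntegral.integral_div, intervalIntegral.integral_add
    (c1.intervalIntegrable _ _) (c2.intervalIntegrable _ _),
    integral_cos_int, integral_cos_int]
  split_ifs <;> first
      | omega
      | ring

lemma aker_integral (ω₁ : ℝ) (k : ℕ) (j : ℤ) :
    aker ω₁ k j = (2*π)⁻¹ * ∫ θ in (0:ℝ)..(2*π), (2*ω₁^2*(1 - Real.cos θ))^k * Real.cos (j*θ) := by
  induction k generalizing j with
  | zero =>
      simp only [pow_zero, one_mul, integral_cos_int, aker]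
      rcases eq_or_ne j 0 with h | h
      · rw [if_pos h, if_pos h, inv_mul_cancel₀ (by positivity)]
      · simp [h]
  | succ k ih =>
      have hpt : ∀ θ : ℝ, (2*ω₁^2*(1 - Real.cos θ))^(k+1) * Real.cos (j*θ)
          = -ω₁^2 * ((2*ω₁^2*(1 - Real.cos θ))^k * Real.cos (((j+1:ℤ) : ℝ)*θ)
            - 2 * ((2*ω₁^2*(1 - Real.cos θ))^k * Real.cos (j*θ))
            + (2*ω₁^2*(1 - Real.cos θ))^k * Real.cos (((j-1:ℤ) : ℝ)*θ)) := by
        intro θ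
        push_cast
        rw [add_mul, sub_mul, one_mul, Real.cos_add, Real.cos_sub, pow_succ]
        ring
      have cg : ∀ (m : ℤ), Continuous fun θ : ℝ => (2*ω₁^2*(1 - Real.cos θ))^k * Real.cos ((m:ℝ)*θ) := by
        intro m; fun_prop
      rw [aker_succ, ih (j+1), ih j, ih (j-1)]
      rw [intervalIntegral.integral_congr (fun θ _ => hpt θ)]
      rw [intervalIntegral.integral_const_mul, intervalIntegral.integral_add,
        intervalIntegral.integral_sub,
        intervalIntegral.integral_const_mul]
      ring
      all_goals exact Continuous.intervalIntegrable (by fun_prop) _ _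

lemma abs_aker_le (ω₁ : ℝ) (k : ℕ) (j : ℤ) : |aker ω₁ k j| ≤ (4*ω₁^2)^k := by
  rw [aker_integral]
  have hb : ∀ θ ∈ Set.uIoc (0:ℝ) (2*π), ‖(2*ω₁^2*(1 - Real.cos θ))^k * Real.cos (j*θ)‖ ≤ (4*ω₁^2)^k := by
    intro θ _
    rw [norm_mul, norm_pow]
    have h3 : ‖2*ω₁^2*(1 - Real.cos θ)‖ ≤ 4*ω₁^2 := by
      rw [Real.norm_eq_abs, abs_mul]
      have h1 : |1 - Real.cos θ| ≤ 2 := by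
        rw [abs_le]; constructor <;> nlinarith [Real.cos_le_one θ, Real.neg_one_le_cos θ]
      have h2 : |2*ω₁^2| = 2*ω₁^2 := abs_of_nonneg (by positivity)
      calc |2*ω₁^2| * |1 - Real.cos θ| ≤ (2*ω₁^2) * 2 := by
            rw [h2]; exact mul_le_mul_of_nonneg_left h1 (by positivity)
        _ = 4*ω₁^2 := by ring
    calc ‖2*ω₁^2*(1 - Real.cos θ)‖^k * ‖Real.cos (j*θ)‖
        ≤ (4*ω₁^2)^k * 1 :=
          mul_le_mul (pow_le_pow_left₀ (norm_nonneg _) h3 k)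
            (by rw [Real.norm_eq_abs]; exact Real.abs_cos_le_one _) (norm_nonneg _) (by positivity)
      _ = (4*ω₁^2)^k := mul_one _
  have hn := intervalIntegral.norm_integral_le_of_norm_le_const hb
  rw [abs_mul, abs_inv]
  have hpi : |2*π| = 2*π := abs_of_nonneg (by positivity)
  rw [hpi]
  calc (2*π)⁻¹ * |∫ θ in (0:ℝ)..(2*π), (2*ω₁^2*(1 - Real.cos θ))^k * Real.cos (j*θ)|
      ≤ (2*π)⁻¹ * ((4*ω₁^2)^k * |2*π - 0|) :=
        mul_le_mul_of_nonneg_left hn (by positivity)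
    _ = (4*ω₁^2)^k := by
        rw [show |2*π - 0| = 2*π by rw [sub_zero]; exact abs_of_nonneg (by positivity)]
        have : (0:ℝ) < 2*π := by positivity
        field_simp

abbrev E := lp (fun _ : ℤ => ℝ) ⊤

lemma summable_of_bounded_support (f : ℤ → ℝ) (N : ℕ) (h : ∀ j : ℤ, N < j.natAbs → f j = 0) :
    Summable f :=
  summable_of_ne_finset_zero (s := Finset.Icc (-(N:ℤ)) N)
    (fun j hj => h j (by rw [Finset.mem_Icc] at hj; omega))

lemma norm_V_le (ω₁ : ℝ) (V : E →L[ℝ] E)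
    (hV : ∀ (q : E) (k : ℤ),
      (V q : ℤ → ℝ) k = -ω₁^2 * ((q : ℤ → ℝ) (k+1) - 2 * (q : ℤ → ℝ) k + (q : ℤ → ℝ) (k-1))) :
    ‖V‖ ≤ 4*ω₁^2 := by
  apply ContinuousLinearMap.opNorm_le_bound _ (by positivity)
  intro q
  apply lp.norm_le_of_forall_le (by positivity)
  intro i
  rw [hV]
  have h1 := lp.norm_apply_le_norm (E := fun _ : ℤ => ℝ) (p := ⊤) (by norm_num) q (i+1)
  have h2 := lp.norm_apply_le_norm (E := fun _ : ℤ => ℝ) (p := ⊤) (by norm_num) q i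
  have h3 := lp.norm_apply_le_norm (E := fun _ : ℤ => ℝ) (p := ⊤) (by norm_num) q (i-1)
  simp only [Real.norm_eq_abs] at *
  have : |(-ω₁^2) * ((q : ℤ → ℝ) (i+1) - 2 * (q : ℤ → ℝ) i + (q : ℤ → ℝ) (i-1))|
      ≤ ω₁^2 * (|(q : ℤ → ℝ) (i+1)| + 2*|(q : ℤ → ℝ) i| + |(q : ℤ → ℝ) (i-1)|) := by
    rw [abs_mul, abs_neg, abs_of_nonneg (sq_nonneg ω₁)]
    apply mul_le_mul_of_nonneg_left _ (sq_nonneg ω₁)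
    calc |(q : ℤ → ℝ) (i+1) - 2 * (q : ℤ → ℝ) i + (q : ℤ → ℝ) (i-1)|
        ≤ |(q : ℤ → ℝ) (i+1) - 2 * (q : ℤ → ℝ) i| + |(q : ℤ → ℝ) (i-1)| := abs_add_le _ _
      _ ≤ |(q : ℤ → ℝ) (i+1)| + |2 * (q : ℤ → ℝ) i| + |(q : ℤ → ℝ) (i-1)| := by
          gcongr; exact abs_sub _ _
      _ = |(q : ℤ → ℝ) (i+1)| + 2*|(q : ℤ → ℝ) i| + |(q : ℤ → ℝ) (i-1)| := by
          rw [abs_mul]; norm_num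
  calc |(-ω₁^2) * ((q : ℤ → ℝ) (i+1) - 2 * (q : ℤ → ℝ) i + (q : ℤ → ℝ) (i-1))|
      ≤ ω₁^2 * (|(q : ℤ → ℝ) (i+1)| + 2*|(q : ℤ → ℝ) i| + |(q : ℤ → ℝ) (i-1)|) := this
    _ ≤ ω₁^2 * (‖q‖ + 2*‖q‖ + ‖q‖) := by gcongr
    _ = 4*ω₁^2*‖q‖ := by ring

lemma norm_Vpow_le (ω₁ : ℝ) (V : E →L[ℝ] E) (hn : ‖V‖ ≤ 4*ω₁^2) (k : ℕ) :
    ‖V^k‖ ≤ (4*ω₁^2)^k := by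
  induction k with
  | zero => rw [pow_zero, pow_zero, ContinuousLinearMap.one_def]; exact ContinuousLinearMap.norm_id_le
  | succ k ih =>
      rw [pow_succ, pow_succ]
      calc ‖V^k * V‖ ≤ ‖V^k‖ * ‖V‖ := ContinuousLinearMap.opNorm_comp_le _ _
        _ ≤ (4*ω₁^2)^k * (4*ω₁^2) := by
            apply mul_le_mul ih hn (norm_nonneg _) (by positivity)

def evalCLM (m : ℤ) : E →L[ℝ] ℝ :=
  LinearMap.mkContinuous
    { toFun := fun q => (q : ℤ → ℝ) m
      map_add' := fun q r => by
        show (↑(q + r) : ℤ → ℝ) m = (↑q : ℤ → ℝ) m + (↑r : ℤ → ℝ) m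
        rw [lp.coeFn_add]; rfl
      map_smul' := fun c q => by
        show (↑(c • q) : ℤ → ℝ) m = c * (↑q : ℤ → ℝ) m
        rw [lp.coeFn_smul]; rfl }
    1 (fun q => by
      rw [one_mul]
      exact lp.norm_apply_le_norm (E := fun _ : ℤ => ℝ) (p := ⊤) (by norm_num) q m)

lemma evalCLM_apply (m : ℤ) (q : E) : evalCLM m q = (q : ℤ → ℝ) m := rfl

lemma pow_apply (ω₁ : ℝ) (V : E →L[ℝ] E)
    (hV : ∀ (q : E) (k : ℤ),
      (V q : ℤ → ℝ) k = -ω₁^2 * ((q : ℤ → ℝ) (k+1) - 2 * (q : ℤ → ℝ) k + (q : ℤ → ℝ) (k-1)))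
    (k : ℕ) (q : E) (m : ℤ) :
    ((V^k) q : ℤ → ℝ) m = ∑' j : ℤ, aker ω₁ k j * (q : ℤ → ℝ) (m+j) := by
  induction k generalizing q m with
  | zero =>
      rw [pow_zero, ContinuousLinearMap.one_apply]
      rw [tsum_eq_single 0 (fun j hj => by
        rw [aker_eq_zero ω₁ 0 j (by omega), zero_mul])]
      simp [aker]
  | succ k ih =>
      have key : ((V^(k+1)) q : ℤ → ℝ) m = ∑' j : ℤ, aker ω₁ k j * ((V q : ℤ → ℝ)) (m+j) := by
        rw [pow_succ, ContinuousLinearMap.mul_apply, ih (V q) m]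
      rw [key]
      have hVq : ∀ j : ℤ, aker ω₁ k j * ((V q : ℤ → ℝ)) (m+j)
          = (-ω₁^2) * (aker ω₁ k j * (q : ℤ → ℝ) (m+j+1))
            - (-ω₁^2) * (2 * (aker ω₁ k j * (q : ℤ → ℝ) (m+j)))
            + (-ω₁^2) * (aker ω₁ k j * (q : ℤ → ℝ) (m+j-1)) := by
        intro j; rw [hV]; ring
      rw [tsum_congr hVq]
      have hs1 : Summable (fun j : ℤ => aker ω₁ k j * (q : ℤ → ℝ) (m+j+1)) :=
        summable_of_bounded_support _ k (fun j hj => by rw [aker_eq_zero ω₁ k j hj, zero_mul])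
      have hs2 : Summable (fun j : ℤ => 2 * (aker ω₁ k j * (q : ℤ → ℝ) (m+j))) :=
        summable_of_bounded_support _ k (fun j hj => by rw [aker_eq_zero ω₁ k j hj, zero_mul, mul_zero])
      have hs3 : Summable (fun j : ℤ => aker ω₁ k j * (q : ℤ → ℝ) (m+j-1)) :=
        summable_of_bounded_support _ k (fun j hj => by rw [aker_eq_zero ω₁ k j hj, zero_mul])
      rw [Summable.tsum_add (((hs1.mul_left _).sub (hs2.mul_left _))) (hs3.mul_left _),
        Summable.tsum_sub (hs1.mul_left _) (hs2.mul_left _)]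
      simp only [tsum_mul_left]
      -- now reindex the target
      have e1 : ∑' j : ℤ, aker ω₁ (k+1) j * (q : ℤ → ℝ) (m+j)
          = (-ω₁^2) * ∑' j : ℤ, (aker ω₁ k (j+1) * (q : ℤ → ℝ) (m+j)
              - 2 * (aker ω₁ k j * (q : ℤ → ℝ) (m+j))
              + aker ω₁ k (j-1) * (q : ℤ → ℝ) (m+j)) := by
        rw [← tsum_mul_left]
        exact tsum_congr (fun j => by rw [aker_succ]; ring)
      rw [e1]
      have hb1 : Summable (fun j : ℤ => aker ω₁ k (j+1) * (q : ℤ → ℝ) (m+j)) :=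
        summable_of_bounded_support _ (k+1) (fun j hj => by
          rw [aker_eq_zero ω₁ k (j+1) (by omega), zero_mul])
      have hb3 : Summable (fun j : ℤ => aker ω₁ k (j-1) * (q : ℤ → ℝ) (m+j)) :=
        summable_of_bounded_support _ (k+1) (fun j hj => by
          rw [aker_eq_zero ω₁ k (j-1) (by omega), zero_mul])
      rw [Summable.tsum_add ((hb1.sub hs2)) hb3, Summable.tsum_sub hb1 hs2]
      simp only [tsum_mul_left]
      have shift1 : ∑' j : ℤ, aker ω₁ k (j+1) * (q : ℤ → ℝ) (m+j)
          = ∑' j : ℤ, aker ω₁ k j * (q : ℤ → ℝ) (m+j-1) := by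
        rw [← (Equiv.addRight (1:ℤ)).tsum_eq (fun j => aker ω₁ k j * (q : ℤ → ℝ) (m+j-1))]
        apply tsum_congr; intro j
        simp only [Equiv.coe_addRight]
        congr 2
        ring
      have shift3 : ∑' j : ℤ, aker ω₁ k (j-1) * (q : ℤ → ℝ) (m+j)
          = ∑' j : ℤ, aker ω₁ k j * (q : ℤ → ℝ) (m+j+1) := by
        rw [← (Equiv.subRight (1:ℤ)).tsum_eq (fun j => aker ω₁ k j * (q : ℤ → ℝ) (m+j+1))]
        apply tsum_congr; intro j
        simp only [Equiv.subRight_apply]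
        congr 2
        ring
      rw [shift1, shift3]
      ring

def coef (t : ℝ) (k : ℕ) : ℝ := (-1)^k * t^(2*k) / (Nat.factorial (2*k))

lemma abs_coef (t : ℝ) (ht : 0 ≤ t) (k : ℕ) :
    |coef t k| = t^(2*k)/(Nat.factorial (2*k)) := by
  rw [coef, abs_div, abs_mul, abs_pow, abs_neg, abs_one, one_pow, one_mul,
    abs_of_nonneg (pow_nonneg ht _), Nat.abs_cast]

lemma summable_sq (x : ℝ) (hx : 0 ≤ x) :
    Summable (fun k : ℕ => x^(2*k)/(Nat.factorial (2*k))) := by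
  refine Summable.of_nonneg_of_le (fun k => by positivity) (fun k => ?_)
    (Real.summable_pow_div_factorial (x^2))
  have h1 : x^(2*k)/((Nat.factorial (2*k)):ℝ) ≤ x^(2*k)/(Nat.factorial k) := by
    gcongr
    omega
  rw [pow_mul] at h1
  rw [pow_mul]
  exact h1

lemma two_mul_add_one_le (k : ℕ) : (2*k+1 : ℝ) ≤ 3^k := by
  induction k with
  | zero => norm_num
  | succ k ih =>
      have h3 : (1:ℝ) ≤ 3^k := one_le_pow₀ (by norm_num)
      push_cast at ih ⊢
      calc (2*((k:ℝ)+1)+1 : ℝ) = (2*k+1) + 2 := by ring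
        _ ≤ 3^k + 2*3^k := by linarith
        _ = 3^(k+1) := by ring

lemma summable_sq3 (x : ℝ) (hx : 0 ≤ x) :
    Summable (fun k : ℕ => (2*(k:ℝ)+1) * (x^(2*k)/(Nat.factorial (2*k)))) := by
  refine Summable.of_nonneg_of_le (fun k => by positivity) (fun k => ?_)
    (Real.summable_pow_div_factorial (3*x^2))
  have h1 : x^(2*k)/((Nat.factorial (2*k)):ℝ) ≤ x^(2*k)/(Nat.factorial k) := by
    gcongr
    omega
  calc (2*(k:ℝ)+1) * (x^(2*k)/(Nat.factorial (2*k)))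
      ≤ 3^k * (x^(2*k)/(Nat.factorial k)) :=
        mul_le_mul (two_mul_add_one_le k) h1 (by positivity) (by positivity)
    _ = (3*x^2)^k / (Nat.factorial k) := by
        rw [mul_pow, pow_mul, mul_div_assoc]

def G (ω₁ t : ℝ) (j : ℤ) : ℝ := ∑' k : ℕ, coef t k * aker ω₁ k j

lemma coef_aker_bound (ω₁ t : ℝ) (ht : 0 ≤ t) (k : ℕ) (j : ℤ) :
    |coef t k * aker ω₁ k j| ≤ (2*ω₁*t)^(2*k)/(Nat.factorial (2*k)) := by
  rw [abs_mul, abs_coef t ht]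
  calc t^(2*k)/(Nat.factorial (2*k)) * |aker ω₁ k j|
      ≤ t^(2*k)/(Nat.factorial (2*k)) * (4*ω₁^2)^k :=
        mul_le_mul_of_nonneg_left (abs_aker_le ω₁ k j) (by positivity)
    _ = (2*ω₁*t)^(2*k)/(Nat.factorial (2*k)) := by
        rw [div_mul_eq_mul_div]
        congr 1
        rw [pow_mul, pow_mul, ← mul_pow]
        congr 1
        ring

lemma summable_coef_aker (ω₁ t : ℝ) (ht : 0 ≤ t) (hω : 0 ≤ ω₁) (j : ℤ) :
    Summable (fun k : ℕ => |coef t k * aker ω₁ k j|) :=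
  Summable.of_nonneg_of_le (fun k => abs_nonneg _)
    (fun k => coef_aker_bound ω₁ t ht k j)
    (summable_sq (2*ω₁*t) (by positivity))

lemma summable_G_slice (ω₁ t : ℝ) (ht : 0 ≤ t) (hω : 0 ≤ ω₁) (j : ℤ) :
    Summable (fun k : ℕ => coef t k * aker ω₁ k j) :=
  (summable_coef_aker ω₁ t ht hω j).of_abs

-- master product summability, weighted by a bounded sequence
lemma summable_uncurry (ω₁ t : ℝ) (ht : 0 ≤ t) (hω : 0 ≤ ω₁) (u : ℤ → ℝ) (C : ℝ)
    (hu : ∀ j, |u j| ≤ C) (hC : 0 ≤ C) :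
    Summable (Function.uncurry fun (k : ℕ) (j : ℤ) => |coef t k * aker ω₁ k j * u j|) := by
  have habs : ∀ (k : ℕ) (j : ℤ),
      |coef t k * aker ω₁ k j * u j| ≤ (2*ω₁*t)^(2*k)/(Nat.factorial (2*k)) * C := by
    intro k j
    rw [abs_mul]
    exact mul_le_mul (coef_aker_bound ω₁ t ht k j) (hu j) (abs_nonneg _) (by positivity)
  apply (summable_prod_of_nonneg (f := Function.uncurry fun (k : ℕ) (j : ℤ) =>
    |coef t k * aker ω₁ k j * u j|) (fun p => abs_nonneg _)).2
  constructor
  · intro k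
    apply summable_of_bounded_support _ k
    intro j hj
    simp only [Function.uncurry_apply_pair]
    rw [aker_eq_zero ω₁ k j hj]
    simp
  · have hg : Summable (fun k : ℕ => (2*(k:ℝ)+1) * ((2*ω₁*t)^(2*k)/(Nat.factorial (2*k)) * C)) := by
      simpa only [mul_assoc] using (summable_sq3 (2*ω₁*t) (by positivity)).mul_right C
    refine Summable.of_nonneg_of_le (fun k => tsum_nonneg (fun j => abs_nonneg _)) (fun k => ?_) hg
    simp only [Function.uncurry_apply_pair]
    rw [tsum_eq_sum (s := Finset.Icc (-(k:ℤ)) k) (fun j hj => by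
      rw [aker_eq_zero ω₁ k j (by rw [Finset.mem_Icc] at hj; omega)]
      simp)]
    calc ∑ j ∈ Finset.Icc (-(k:ℤ)) k, |coef t k * aker ω₁ k j * u j|
        ≤ (Finset.Icc (-(k:ℤ)) k).card • ((2*ω₁*t)^(2*k)/(Nat.factorial (2*k)) * C) :=
          Finset.sum_le_card_nsmul _ _ _ (fun j _ => habs k j)
      _ = (2*(k:ℝ)+1) * ((2*ω₁*t)^(2*k)/(Nat.factorial (2*k)) * C) := by
          rw [Int.card_Icc, nsmul_eq_mul,
            show ((k:ℤ) + 1 - -(k:ℤ)) = ((2*k+1 : ℕ) : ℤ) by push_cast; ring,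
            Int.toNat_natCast]
          push_cast
          ring

lemma summable_absG (ω₁ t : ℝ) (ht : 0 ≤ t) (hω : 0 ≤ ω₁) :
    Summable (fun j : ℤ => ∑' k : ℕ, |coef t k * aker ω₁ k j|) := by
  have h := summable_uncurry ω₁ t ht hω (fun _ => 1) 1 (fun j => by norm_num) zero_le_one
  simp only [mul_one] at h
  have h2 : Summable (fun p : ℤ × ℕ => |coef t p.2 * aker ω₁ p.2 p.1|) := by
    rw [← (Equiv.prodComm ℕ ℤ).summable_iff]
    exact h
  exact ((summable_prod_of_nonneg (fun p => abs_nonneg _)).1 h2).2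

lemma abs_G_le (ω₁ t : ℝ) (ht : 0 ≤ t) (hω : 0 ≤ ω₁) (j : ℤ) :
    |G ω₁ t j| ≤ ∑' k : ℕ, |coef t k * aker ω₁ k j| := by
  have hs : Summable (fun k : ℕ => ‖coef t k * aker ω₁ k j‖) :=
    (summable_coef_aker ω₁ t ht hω j).congr (fun k => (Real.norm_eq_abs _).symm)
  have := norm_tsum_le_tsum_norm hs
  simp only [Real.norm_eq_abs] at this
  exact this

lemma summable_abs_G (ω₁ t : ℝ) (ht : 0 ≤ t) (hω : 0 ≤ ω₁) :
    Summable (fun j : ℤ => |G ω₁ t j|) :=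
  Summable.of_nonneg_of_le (fun j => abs_nonneg _) (fun j => abs_G_le ω₁ t ht hω j)
    (summable_absG ω₁ t ht hω)


lemma tfac_bound (ω₁ t : ℝ) (ht : 0 ≤ t) (hω : 0 ≤ ω₁) (k : ℕ) :
    t^(2*k)/(Nat.factorial (2*k)) * (4*ω₁^2)^k = (2*ω₁*t)^(2*k)/(Nat.factorial (2*k)) := by
  rw [div_mul_eq_mul_div]
  congr 1
  rw [pow_mul, pow_mul, ← mul_pow]
  congr 1
  ring

lemma norm_coef_smul_le (ω₁ t : ℝ) (ht : 0 ≤ t) (hω : 0 ≤ ω₁) (V : E →L[ℝ] E)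
    (hVn : ‖V‖ ≤ 4*ω₁^2) (k : ℕ) :
    ‖coef t k • V^k‖ ≤ (2*ω₁*t)^(2*k)/(Nat.factorial (2*k)) := by
  rw [norm_smul (coef t k) (V^k), Real.norm_eq_abs, abs_coef t ht, ← tfac_bound ω₁ t ht hω k]
  exact mul_le_mul_of_nonneg_left (norm_Vpow_le ω₁ V hVn k) (by positivity)

lemma summable_op (ω₁ t : ℝ) (ht : 0 ≤ t) (hω : 0 ≤ ω₁) (V : E →L[ℝ] E)
    (hVn : ‖V‖ ≤ 4*ω₁^2) :
    Summable (fun k : ℕ => coef t k • V^k) :=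
  Summable.of_norm (Summable.of_nonneg_of_le (fun k => norm_nonneg _)
    (norm_coef_smul_le ω₁ t ht hω V hVn) (summable_sq (2*ω₁*t) (by positivity)))

lemma apply_eq (ω₁ t : ℝ) (ht : 0 ≤ t) (hω : 0 ≤ ω₁) (V : E →L[ℝ] E)
    (hV : ∀ (q : E) (k : ℤ),
      (V q : ℤ → ℝ) k = -ω₁^2 * ((q : ℤ → ℝ) (k+1) - 2 * (q : ℤ → ℝ) k + (q : ℤ → ℝ) (k-1)))
    (hVn : ‖V‖ ≤ 4*ω₁^2) (q : E) (m : ℤ) :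
    (((∑' k : ℕ, coef t k • V^k) q : ℤ → ℝ)) m = ∑' j : ℤ, G ω₁ t j * (q : ℤ → ℝ) (m+j) := by
  have hS := summable_op ω₁ t ht hω V hVn
  have h2 : HasSum (fun k : ℕ => ((evalCLM m).comp (ContinuousLinearMap.apply ℝ E q))
      (coef t k • V^k))
      (((evalCLM m).comp (ContinuousLinearMap.apply ℝ E q)) (∑' k : ℕ, coef t k • V^k)) :=
    ContinuousLinearMap.hasSum _ hS.hasSum
  have h3 : (((∑' k : ℕ, coef t k • V^k) q : ℤ → ℝ)) m
      = ∑' k : ℕ, coef t k * (((V^k) q : ℤ → ℝ)) m := by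
    rw [← evalCLM_apply]
    have e : (evalCLM m) ((∑' k : ℕ, coef t k • V^k) q)
        = ((evalCLM m).comp (ContinuousLinearMap.apply ℝ E q)) (∑' k : ℕ, coef t k • V^k) := rfl
    rw [e, ← h2.tsum_eq]
    apply tsum_congr
    intro k
    show (evalCLM m) ((coef t k • V^k) q) = _
    rw [ContinuousLinearMap.smul_apply, _root_.map_smul, smul_eq_mul, evalCLM_apply]
  rw [h3]
  have h4 : ∀ k : ℕ, coef t k * (((V^k) q : ℤ → ℝ)) m
      = ∑' j : ℤ, coef t k * (aker ω₁ k j * (q : ℤ → ℝ) (m+j)) := by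
    intro k
    rw [pow_apply ω₁ V hV k q m, tsum_mul_left]
  rw [tsum_congr h4]
  have hunc : Summable (Function.uncurry fun (k : ℕ) (j : ℤ) =>
      coef t k * (aker ω₁ k j * (q : ℤ → ℝ) (m+j))) := by
    apply Summable.of_abs
    have := summable_uncurry ω₁ t ht hω (fun j => (q : ℤ → ℝ) (m+j)) ‖q‖
      (fun j => by
        rw [← Real.norm_eq_abs]
        exact lp.norm_apply_le_norm (by norm_num) q (m+j)) (norm_nonneg q)
    exact this.congr (fun p => by
      obtain ⟨k, j⟩ := p
      simp only [Function.uncurry_apply_pair, mul_assoc])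
  have hslice1 : ∀ k : ℕ, Summable (fun j : ℤ => coef t k * (aker ω₁ k j * (q : ℤ → ℝ) (m+j))) := by
    intro k
    apply summable_of_bounded_support _ k
    intro j hj
    rw [aker_eq_zero ω₁ k j hj]
    simp
  have hslice2 : ∀ j : ℤ, Summable (fun k : ℕ => coef t k * (aker ω₁ k j * (q : ℤ → ℝ) (m+j))) := by
    intro j
    exact ((summable_G_slice ω₁ t ht hω j).mul_right ((q : ℤ → ℝ) (m+j))).congr
      (fun k => by rw [mul_assoc])
  rw [← Summable.tsum_comm' hunc hslice1 hslice2]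
  apply tsum_congr
  intro j
  rw [tsum_congr (fun k : ℕ => (mul_assoc (coef t k) (aker ω₁ k j) ((q : ℤ → ℝ) (m+j))).symm),
    tsum_mul_right]
  rfl

lemma opnorm_le_l1 (ω₁ t : ℝ) (ht : 0 ≤ t) (hω : 0 ≤ ω₁) (V : E →L[ℝ] E)
    (hV : ∀ (q : E) (k : ℤ),
      (V q : ℤ → ℝ) k = -ω₁^2 * ((q : ℤ → ℝ) (k+1) - 2 * (q : ℤ → ℝ) k + (q : ℤ → ℝ) (k-1)))
    (hVn : ‖V‖ ≤ 4*ω₁^2) :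
    ‖∑' k : ℕ, coef t k • V^k‖ ≤ ∑' j : ℤ, |G ω₁ t j| := by
  apply ContinuousLinearMap.opNorm_le_bound _ (tsum_nonneg (fun j => abs_nonneg _))
  intro q
  apply lp.norm_le_of_forall_le (mul_nonneg (tsum_nonneg (fun j => abs_nonneg _)) (norm_nonneg q))
  intro m
  rw [Real.norm_eq_abs, apply_eq ω₁ t ht hω V hV hVn q m]
  have hsum1 : Summable (fun j : ℤ => |G ω₁ t j| * ‖q‖) := (summable_abs_G ω₁ t ht hω).mul_right _
  have hptw : ∀ j : ℤ, |G ω₁ t j * (q : ℤ → ℝ) (m+j)| ≤ |G ω₁ t j| * ‖q‖ := by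
    intro j
    rw [abs_mul]
    apply mul_le_mul_of_nonneg_left _ (abs_nonneg _)
    rw [← Real.norm_eq_abs]
    exact lp.norm_apply_le_norm (by norm_num) q (m+j)
  have hsum2 : Summable (fun j : ℤ => |G ω₁ t j * (q : ℤ → ℝ) (m+j)|) :=
    Summable.of_nonneg_of_le (fun j => abs_nonneg _) hptw hsum1
  calc |∑' j : ℤ, G ω₁ t j * (q : ℤ → ℝ) (m+j)|
      ≤ ∑' j : ℤ, |G ω₁ t j * (q : ℤ → ℝ) (m+j)| := by
        have := norm_tsum_le_tsum_norm (f := fun j : ℤ => G ω₁ t j * (q : ℤ → ℝ) (m+j))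
          (hsum2.congr (fun j => (Real.norm_eq_abs _).symm))
        simpa only [Real.norm_eq_abs] using this
    _ ≤ ∑' j : ℤ, |G ω₁ t j| * ‖q‖ := Summable.tsum_le_tsum hptw hsum2 hsum1
    _ = (∑' j : ℤ, |G ω₁ t j|) * ‖q‖ := tsum_mul_right

lemma opnorm_le_series (ω₁ t : ℝ) (ht : 0 ≤ t) (hω : 0 ≤ ω₁) (V : E →L[ℝ] E)
    (hVn : ‖V‖ ≤ 4*ω₁^2) :
    ‖∑' k : ℕ, coef t k • V^k‖ ≤ ∑' k : ℕ, (2*ω₁*t)^(2*k)/(Nat.factorial (2*k)) := by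
  have hs : Summable (fun k : ℕ => ‖coef t k • V^k‖) :=
    Summable.of_nonneg_of_le (fun k => norm_nonneg _)
      (norm_coef_smul_le ω₁ t ht hω V hVn) (summable_sq (2*ω₁*t) (by positivity))
  calc ‖∑' k : ℕ, coef t k • V^k‖ ≤ ∑' k : ℕ, ‖coef t k • V^k‖ := norm_tsum_le_tsum_norm hs
    _ ≤ ∑' k : ℕ, (2*ω₁*t)^(2*k)/(Nat.factorial (2*k)) :=
        Summable.tsum_le_tsum (norm_coef_smul_le ω₁ t ht hω V hVn) hs (summable_sq (2*ω₁*t) (by positivity))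

lemma g_nonneg (ω₁ θ : ℝ) : 0 ≤ 2*ω₁^2*(1 - Real.cos θ) := by
  have := Real.cos_le_one θ
  nlinarith [sq_nonneg ω₁]

lemma g_le (ω₁ θ : ℝ) : 2*ω₁^2*(1 - Real.cos θ) ≤ 4*ω₁^2 := by
  have := Real.neg_one_le_cos θ
  nlinarith [sq_nonneg ω₁]

lemma cos_sqrt_eq (ω₁ t θ : ℝ) :
    Real.cos (t * Real.sqrt (2*ω₁^2*(1 - Real.cos θ)))
      = ∑' k : ℕ, coef t k * (2*ω₁^2*(1 - Real.cos θ))^k := by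
  rw [Real.cos_eq_tsum]
  apply tsum_congr
  intro k
  rw [coef]
  rw [mul_pow, pow_mul (Real.sqrt _), Real.sq_sqrt (g_nonneg ω₁ θ)]
  ring

lemma G_integral (ω₁ t : ℝ) (ht : 0 ≤ t) (hω : 0 ≤ ω₁) :
    ∀ j : ℤ, G ω₁ t j = (2*π)⁻¹ * ∫ θ in (0:ℝ)..(2*π),
      Real.cos (t * Real.sqrt (2*ω₁^2*(1 - Real.cos θ))) * Real.cos (j*θ) := by
  intro j
  set μ := volume.restrict (Set.Ioc (0:ℝ) (2*π)) with hμ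
  set F : ℕ → ℝ → ℝ := fun k θ => coef t k * ((2*ω₁^2*(1 - Real.cos θ))^k * Real.cos (j*θ)) with hF
  have hcont : ∀ k, Continuous (F k) := by
    intro k; apply continuous_const.mul; fun_prop
  have hFb : ∀ k θ, ‖F k θ‖ ≤ (2*ω₁*t)^(2*k)/(Nat.factorial (2*k)) := by
    intro k θ
    rw [hF, norm_mul, norm_mul, norm_pow]
    have h1 : ‖2*ω₁^2*(1 - Real.cos θ)‖ ≤ 4*ω₁^2 := by
      rw [Real.norm_eq_abs, abs_of_nonneg (g_nonneg ω₁ θ)]; exact g_le ω₁ θ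
    have h2 : ‖Real.cos ((j:ℝ)*θ)‖ ≤ 1 := by
      rw [Real.norm_eq_abs]; exact Real.abs_cos_le_one _
    calc ‖coef t k‖ * (‖2*ω₁^2*(1 - Real.cos θ)‖^k * ‖Real.cos ((j:ℝ)*θ)‖)
        ≤ (t^(2*k)/(Nat.factorial (2*k))) * ((4*ω₁^2)^k * 1) := by
          apply mul_le_mul
          · rw [Real.norm_eq_abs, abs_coef t ht]
          · exact mul_le_mul (pow_le_pow_left₀ (norm_nonneg _) h1 k) h2 (norm_nonneg _) (by positivity)
          · positivity
          · positivity
      _ = (2*ω₁*t)^(2*k)/(Nat.factorial (2*k)) := by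
          rw [mul_one, div_mul_eq_mul_div]
          congr 1
          rw [pow_mul, pow_mul, ← mul_pow]
          congr 1
          ring
  have hInt : ∀ k, Integrable (F k) μ := fun k => (hcont k).integrableOn_Ioc
  have hμuniv : (μ Set.univ).toReal = 2*π := by
    rw [hμ, Measure.restrict_apply_univ, Real.volume_Ioc]
    rw [ENNReal.toReal_ofReal (by rw [sub_zero]; positivity)]
    ring
  have hIntNorm : Summable (fun k => ∫ θ, ‖F k θ‖ ∂μ) := by
    refine Summable.of_nonneg_of_le (fun k => integral_nonneg (fun θ => norm_nonneg _))
      (fun k => ?_) ((summable_sq (2*ω₁*t) (by positivity)).mul_right (2*π))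
    calc ∫ θ, ‖F k θ‖ ∂μ
        ≤ ∫ _, (2*ω₁*t)^(2*k)/(Nat.factorial (2*k)) ∂μ :=
          integral_mono (hInt k).norm (integrable_const _) (fun θ => hFb k θ)
      _ = (2*ω₁*t)^(2*k)/(Nat.factorial (2*k)) * (2*π) := by
          rw [MeasureTheory.integral_const, smul_eq_mul, mul_comm, measureReal_def, hμuniv]
  have key := hasSum_integral_of_summable_integral_norm hInt hIntNorm
  have hG : G ω₁ t j = (2*π)⁻¹ * ∑' k : ℕ, ∫ θ, F k θ ∂μ := by
    rw [G, ← tsum_mul_left]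
    apply tsum_congr
    intro k
    rw [aker_integral ω₁ k j, intervalIntegral.integral_of_le (by positivity), ← hμ]
    rw [hF]
    rw [MeasureTheory.integral_const_mul]
    ring
  rw [hG, key.tsum_eq]
  rw [intervalIntegral.integral_of_le (by positivity), ← hμ]
  congr 1
  apply MeasureTheory.integral_congr_ae
  apply Filter.Eventually.of_forall
  intro θ
  show (∑' k : ℕ, F k θ) = Real.cos (t * Real.sqrt (2*ω₁^2*(1 - Real.cos θ))) * Real.cos (j*θ)
  have h5 : (∑' k : ℕ, F k θ) = ∑' k : ℕ, (coef t k * (2*ω₁^2*(1 - Real.cos θ))^k) * Real.cos (j*θ) :=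
    tsum_congr (fun k => by rw [hF]; ring)
  rw [h5, tsum_mul_right, ← cos_sqrt_eq ω₁ t θ]

lemma bessel (ω₁ t : ℝ) (ht : 0 ≤ t) (hω : 0 ≤ ω₁) (S : Finset ℤ) :
    ∑ j ∈ S, (G ω₁ t j)^2 ≤ 1 := by
  set f : ℝ → ℝ := fun θ => Real.cos (t * Real.sqrt (2*ω₁^2*(1 - Real.cos θ))) with hf
  have hfc : Continuous f := by rw [hf]; fun_prop
  have hfle : ∀ θ : ℝ, (f θ)^2 ≤ 1 := fun θ => Real.cos_sq_le_one _
  set P : ℝ → ℝ := fun θ => ∑ j ∈ S, G ω₁ t j * Real.cos (j*θ) with hP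
  have hPc : Continuous P := by
    rw [hP]; apply continuous_finset_sum; intro j _; fun_prop
  have hGj : ∀ j : ℤ, ∫ θ in (0:ℝ)..(2*π), f θ * Real.cos (j*θ) = 2*π * G ω₁ t j := by
    intro j
    rw [G_integral ω₁ t ht hω j, ← mul_assoc, mul_inv_cancel₀ (by positivity : (2*π) ≠ 0), one_mul]
  have hIf2 : ∫ θ in (0:ℝ)..(2*π), (f θ)^2 ≤ 2*π := by
    calc ∫ θ in (0:ℝ)..(2*π), (f θ)^2
        ≤ ∫ _ in (0:ℝ)..(2*π), (1:ℝ) :=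
          intervalIntegral.integral_mono_on (by positivity)
            ((hfc.pow 2).intervalIntegrable _ _) (intervalIntegrable_const)
            (fun θ _ => hfle θ)
      _ = 2*π := by simp
  have hIfP : ∫ θ in (0:ℝ)..(2*π), f θ * P θ = 2*π * ∑ j ∈ S, (G ω₁ t j)^2 := by
    have h1 : ∀ θ : ℝ, f θ * P θ = ∑ j ∈ S, G ω₁ t j * (f θ * Real.cos (j*θ)) := by
      intro θ
      rw [hP, Finset.mul_sum]
      apply Finset.sum_congr rfl
      intro j _
      ring
    rw [intervalIntegral.integral_congr (fun θ _ => h1 θ)]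
    rw [intervalIntegral.integral_finset_sum (fun j _ =>
      (Continuous.intervalIntegrable (by fun_prop) _ _ :
        IntervalIntegrable (fun θ => G ω₁ t j * (f θ * Real.cos (j*θ))) volume 0 (2*π)))]
    rw [Finset.mul_sum]
    apply Finset.sum_congr rfl
    intro j _
    rw [intervalIntegral.integral_const_mul, hGj j]
    ring
  have sumsq_nonneg : (0:ℝ) ≤ ∑ j ∈ S, (G ω₁ t j)^2 :=
    Finset.sum_nonneg (fun j _ => sq_nonneg _)
  have hIP2 : ∫ θ in (0:ℝ)..(2*π), (P θ)^2 ≤ 2*π * ∑ j ∈ S, (G ω₁ t j)^2 := by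
    have h1 : ∀ θ : ℝ, (P θ)^2 = ∑ j ∈ S, ∑ i ∈ S,
        (G ω₁ t j * G ω₁ t i) * (Real.cos (j*θ) * Real.cos (i*θ)) := by
      intro θ
      rw [hP, sq, Finset.sum_mul_sum]
      apply Finset.sum_congr rfl
      intro j _
      apply Finset.sum_congr rfl
      intro i _
      ring
    rw [intervalIntegral.integral_congr (fun θ _ => h1 θ)]
    rw [intervalIntegral.integral_finset_sum (fun j _ => by
      apply Continuous.intervalIntegrable
      apply continuous_finset_sum
      intro i _
      exact (continuous_const.mul (by fun_prop)))]
    have h2 : ∀ j ∈ S, (∫ θ in (0:ℝ)..(2*π), ∑ i ∈ S,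
        (G ω₁ t j * G ω₁ t i) * (Real.cos (j*θ) * Real.cos (i*θ)))
        = π * ((G ω₁ t j)^2 + G ω₁ t j * (if -j ∈ S then G ω₁ t (-j) else 0)) := by
      intro j hj
      have h3 : ∀ i ∈ S, (∫ θ in (0:ℝ)..(2*π),
          (G ω₁ t j * G ω₁ t i) * (Real.cos (j*θ) * Real.cos (i*θ)))
          = G ω₁ t j * G ω₁ t i * (π * ((if j = i then 1 else 0) + (if j = -i then 1 else 0))) := by
        intro i _
        rw [intervalIntegral.integral_const_mul, orth j i]
      have expand : ∀ i ∈ S, G ω₁ t j * G ω₁ t i * (π * ((if j = i then 1 else 0) + (if j = -i then 1 else 0)))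
          = π * ((if i = j then G ω₁ t j * G ω₁ t i else 0) + (if i = -j then G ω₁ t j * G ω₁ t i else 0)) := by
        intro i _
        have c1 : (if j = i then (1:ℝ) else 0) = (if i = j then 1 else 0) := by
          split_ifs with h1 h2 <;> first | rfl | omega
        have c2 : (if j = -i then (1:ℝ) else 0) = (if i = -j then 1 else 0) := by
          split_ifs with h1 h2 <;> first | rfl | omega
        rw [c1, c2]
        split_ifs <;> ring
      calc (∫ θ in (0:ℝ)..(2*π), ∑ i ∈ S,
          (G ω₁ t j * G ω₁ t i) * (Real.cos (j*θ) * Real.cos (i*θ)))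
          = ∑ i ∈ S, (∫ θ in (0:ℝ)..(2*π),
            (G ω₁ t j * G ω₁ t i) * (Real.cos (j*θ) * Real.cos (i*θ))) :=
            intervalIntegral.integral_finset_sum (fun i _ =>
              Continuous.intervalIntegrable (by fun_prop) _ _)
        _ = ∑ i ∈ S, G ω₁ t j * G ω₁ t i * (π * ((if j = i then 1 else 0) + (if j = -i then 1 else 0))) :=
            Finset.sum_congr rfl h3
        _ = ∑ i ∈ S, π * ((if i = j then G ω₁ t j * G ω₁ t i else 0) + (if i = -j then G ω₁ t j * G ω₁ t i else 0)) :=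
            Finset.sum_congr rfl expand
        _ = π * ∑ i ∈ S, ((if i = j then G ω₁ t j * G ω₁ t i else 0) + (if i = -j then G ω₁ t j * G ω₁ t i else 0)) :=
            (Finset.mul_sum _ _ _).symm
        _ = π * ((G ω₁ t j)^2 + G ω₁ t j * (if -j ∈ S then G ω₁ t (-j) else 0)) := by
            rw [Finset.sum_add_distrib]
            congr 1
            congr 1
            · rw [Finset.sum_ite_eq' S j (fun i => G ω₁ t j * G ω₁ t i), if_pos hj, sq]
            · rw [Finset.sum_ite_eq' S (-j) (fun i => G ω₁ t j * G ω₁ t i)]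
              split_ifs with h
              · rfl
              · rw [mul_zero]
    have hstep : ∑ j ∈ S, (∫ θ in (0:ℝ)..(2*π), ∑ i ∈ S,
        (G ω₁ t j * G ω₁ t i) * (Real.cos (j*θ) * Real.cos (i*θ)))
        = π * ((∑ j ∈ S, (G ω₁ t j)^2)
            + ∑ j ∈ S, G ω₁ t j * (if -j ∈ S then G ω₁ t (-j) else 0)) := by
      rw [Finset.sum_congr rfl h2, ← Finset.mul_sum, Finset.sum_add_distrib]
    rw [hstep]
    have hneg : ∑ j ∈ S, (if -j ∈ S then (G ω₁ t (-j))^2 else 0) ≤ ∑ j ∈ S, (G ω₁ t j)^2 := by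
      rw [← Finset.sum_filter]
      have himg : ∑ b ∈ (S.filter (fun j => -j ∈ S)).image (fun a => -a), (G ω₁ t b)^2
          = ∑ a ∈ S.filter (fun j => -j ∈ S), (G ω₁ t (-a))^2 :=
        Finset.sum_image (fun x _ y _ h => by omega)
      rw [← himg]
      apply Finset.sum_le_sum_of_subset_of_nonneg
      · intro b hb
        rw [Finset.mem_image] at hb
        obtain ⟨a, ha, rfl⟩ := hb
        rw [Finset.mem_filter] at ha
        exact ha.2
      · intro j _ _
        exact sq_nonneg _
    have cross : ∑ j ∈ S, G ω₁ t j * (if -j ∈ S then G ω₁ t (-j) else 0)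
        ≤ ∑ j ∈ S, (G ω₁ t j)^2 := by
      have hterm : ∀ j ∈ S, G ω₁ t j * (if -j ∈ S then G ω₁ t (-j) else 0)
          ≤ ((G ω₁ t j)^2 + (if -j ∈ S then (G ω₁ t (-j))^2 else 0))/2 := by
        intro j _
        split_ifs with h
        · nlinarith [sq_nonneg (G ω₁ t j - G ω₁ t (-j))]
        · rw [mul_zero, add_zero]
          positivity
      calc ∑ j ∈ S, G ω₁ t j * (if -j ∈ S then G ω₁ t (-j) else 0)
          ≤ ∑ j ∈ S, ((G ω₁ t j)^2 + (if -j ∈ S then (G ω₁ t (-j))^2 else 0))/2 :=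
            Finset.sum_le_sum hterm
        _ = ((∑ j ∈ S, (G ω₁ t j)^2) + ∑ j ∈ S, (if -j ∈ S then (G ω₁ t (-j))^2 else 0))/2 := by
            rw [← Finset.sum_div, Finset.sum_add_distrib]
        _ ≤ ((∑ j ∈ S, (G ω₁ t j)^2) + ∑ j ∈ S, (G ω₁ t j)^2)/2 := by gcongr
        _ = ∑ j ∈ S, (G ω₁ t j)^2 := by ring
    nlinarith [Real.pi_pos]
  have h0 : 0 ≤ ∫ θ in (0:ℝ)..(2*π), (f θ - P θ)^2 :=
    intervalIntegral.integral_nonneg (by positivity) (fun θ _ => sq_nonneg _)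
  have hexp : ∫ θ in (0:ℝ)..(2*π), (f θ - P θ)^2
      = (∫ θ in (0:ℝ)..(2*π), (f θ)^2) - 2*(∫ θ in (0:ℝ)..(2*π), f θ * P θ)
        + (∫ θ in (0:ℝ)..(2*π), (P θ)^2) := by
    have h1 : ∀ θ : ℝ, (f θ - P θ)^2 = (f θ)^2 - 2*(f θ * P θ) + (P θ)^2 := fun θ => by ring
    rw [intervalIntegral.integral_congr (fun θ _ => h1 θ)]
    rw [intervalIntegral.integral_add,
      intervalIntegral.integral_sub,
      intervalIntegral.integral_const_mul]
    all_goals exact Continuous.intervalIntegrable (by fun_prop) _ _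
  rw [hexp, hIfP] at h0
  nlinarith [Real.pi_pos]

lemma pow_le_fact_mul_exp (n : ℕ) : ((n:ℝ))^n ≤ (n.factorial : ℝ) * Real.exp n := by
  have h := Real.sum_le_exp_of_nonneg (x := (n:ℝ)) (by positivity) (n+1)
  have h1 : ((n:ℝ))^n / (n.factorial : ℝ)
      ≤ ∑ i ∈ Finset.range (n+1), (n:ℝ)^i / (i.factorial : ℝ) :=
    Finset.single_le_sum (f := fun i => (n:ℝ)^i / (i.factorial : ℝ))
      (fun i _ => by positivity) (Finset.self_mem_range_succ n)
  have h2 : ((n:ℝ))^n / (n.factorial : ℝ) ≤ Real.exp n := le_trans h1 h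
  rw [div_le_iff₀ (by positivity)] at h2
  linarith [h2]

lemma term_tail_bound (x : ℝ) (hx : 0 ≤ x) (k : ℕ) (hk1 : 1 ≤ k) (hk : 3*x ≤ (k:ℝ)) :
    x^(2*k)/(Nat.factorial (2*k)) ≤ (1/4)^k := by
  have he : Real.exp 1 ≤ 3 := by
    have := Real.exp_one_lt_d9
    linarith
  have hA := pow_le_fact_mul_exp (2*k)
  have hxe : x * Real.exp 1 ≤ (k:ℝ) := by
    have h3 : x * Real.exp 1 ≤ x * 3 :=
      mul_le_mul_of_nonneg_left he hx
    linarith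
  have h1 : (x * Real.exp 1)^(2*k) ≤ (k:ℝ)^(2*k) :=
    pow_le_pow_left₀ (by positivity) hxe _
  have h2 : (4:ℝ)^k * (k:ℝ)^(2*k) = ((2*k : ℕ):ℝ)^(2*k) := by
    push_cast
    rw [mul_pow (2:ℝ) (k:ℝ) (2*k), show ((4:ℝ))^k = 2^(2*k) by rw [pow_mul]; norm_num]
  have hexp : Real.exp ((2*k : ℕ):ℝ) = (Real.exp 1)^(2*k) := by
    rw [← Real.exp_one_pow]
  have h3 : (4:ℝ)^k * (x^(2*k) * (Real.exp 1)^(2*k))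
      ≤ ((2*k).factorial : ℝ) * (Real.exp 1)^(2*k) := by
    calc (4:ℝ)^k * (x^(2*k) * (Real.exp 1)^(2*k))
        = (4:ℝ)^k * (x * Real.exp 1)^(2*k) := by rw [mul_pow]
      _ ≤ (4:ℝ)^k * (k:ℝ)^(2*k) :=
          mul_le_mul_of_nonneg_left h1 (by positivity)
      _ = ((2*k : ℕ):ℝ)^(2*k) := h2
      _ ≤ ((2*k).factorial : ℝ) * Real.exp ((2*k : ℕ):ℝ) := hA
      _ = ((2*k).factorial : ℝ) * (Real.exp 1)^(2*k) := by rw [hexp]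
  have h4 : (4:ℝ)^k * x^(2*k) ≤ ((2*k).factorial : ℝ) := by
    have hpos : (0:ℝ) < (Real.exp 1)^(2*k) := by positivity
    apply le_of_mul_le_mul_right ?_ hpos
    calc (4:ℝ)^k * x^(2*k) * (Real.exp 1)^(2*k)
        = (4:ℝ)^k * (x^(2*k) * (Real.exp 1)^(2*k)) := by ring
      _ ≤ ((2*k).factorial : ℝ) * (Real.exp 1)^(2*k) := h3
  rw [div_le_iff₀ (by positivity : (0:ℝ) < ((2*k).factorial : ℝ))]
  have h5 : (1/4:ℝ)^k = ((4:ℝ)^k)⁻¹ := by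
    rw [one_div, inv_pow]
  rw [h5]
  rw [inv_mul_eq_div, le_div_iff₀ (by positivity : (0:ℝ) < (4:ℝ)^k)]
  linarith [h4]

lemma hasSum_ite_geom (m : ℕ) :
    HasSum (fun k : ℕ => if m ≤ k then (1/4:ℝ)^k else 0) ((1/4)^m * (4/3)) := by
  have h0 : HasSum (fun i : ℕ => (1/4:ℝ)^(m+i)) ((1/4)^m * (4/3)) := by
    have h := (hasSum_geometric_of_lt_one (r := (1/4:ℝ)) (by norm_num) (by norm_num)).mul_left
      ((1/4:ℝ)^m)
    rw [show (1 - (1/4:ℝ))⁻¹ = 4/3 by norm_num] at h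
    have e : (fun i : ℕ => (1/4:ℝ)^m * (1/4)^i) = fun i : ℕ => (1/4:ℝ)^(m+i) :=
      funext (fun i => (pow_add (1/4:ℝ) m i).symm)
    rw [e] at h
    exact h
  have hinj : Function.Injective (fun i : ℕ => m + i) := fun a b h => by
    simp only at h
    omega
  apply (Function.Injective.hasSum_iff hinj ?_).1 ?_
  · intro k hk
    have hlt : k < m := by
      by_contra hc
      exact hk ⟨k - m, by simp only; omega⟩
    rw [if_neg (by omega)]
  · have e2 : ((fun k : ℕ => if m ≤ k then (1/4:ℝ)^k else 0) ∘ (fun i : ℕ => m + i))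
        = fun i : ℕ => (1/4:ℝ)^(m+i) := by
      funext i
      simp only [Function.comp_apply]
      rw [if_pos (by omega)]
    rw [e2]
    exact h0

lemma abs_G_tail (ω₁ t : ℝ) (ht : 0 ≤ t) (hω : 0 ≤ ω₁) (j : ℤ) (hj1 : 1 ≤ j.natAbs)
    (hj : 3*(2*ω₁*t) ≤ (j.natAbs : ℝ)) :
    |G ω₁ t j| ≤ (1/4)^(j.natAbs) * (4/3) := by
  refine (abs_G_le ω₁ t ht hω j).trans ?_
  rw [← (hasSum_ite_geom j.natAbs).tsum_eq]
  apply Summable.tsum_le_tsum ?_ (summable_coef_aker ω₁ t ht hω j) (hasSum_ite_geom j.natAbs).summable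
  intro k
  rcases lt_or_ge k j.natAbs with hk | hk
  · rw [aker_eq_zero ω₁ k j hk, mul_zero, abs_zero, if_neg (by omega)]
  · rw [if_pos hk]
    refine (coef_aker_bound ω₁ t ht k j).trans ?_
    exact term_tail_bound (2*ω₁*t) (by positivity) k (by omega)
      (le_trans hj (by exact_mod_cast Nat.cast_le.2 hk))

lemma hasSum_absgeom : HasSum (fun j : ℤ => (1/4:ℝ)^(j.natAbs) * (4/3)) (20/9) := by
  have h1 : HasSum (fun n : ℕ => (1/4:ℝ)^((n:ℤ).natAbs) * (4/3)) (16/9) := by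
    have h := (hasSum_geometric_of_lt_one (r := (1/4:ℝ)) (by norm_num) (by norm_num)).mul_right (4/3)
    rw [show (1 - (1/4:ℝ))⁻¹ * (4/3) = 16/9 by norm_num] at h
    have e : (fun n : ℕ => (1/4:ℝ)^n * (4/3)) = fun n : ℕ => (1/4:ℝ)^((n:ℤ).natAbs) * (4/3) := by
      funext n
      rw [Int.natAbs_natCast]
    rw [← e]
    exact h
  have h2 : HasSum (fun n : ℕ => (1/4:ℝ)^((-((n:ℤ)+1)).natAbs) * (4/3)) (4/9) := by
    have h := (hasSum_geometric_of_lt_one (r := (1/4:ℝ)) (by norm_num) (by norm_num)).mul_left (1/3)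
    rw [show (1/3:ℝ) * (1 - (1/4:ℝ))⁻¹ = 4/9 by norm_num] at h
    have e : (fun n : ℕ => (1/3:ℝ) * (1/4)^n) = fun n : ℕ => (1/4:ℝ)^((-(n+1) : ℤ).natAbs) * (4/3) := by
      funext n
      rw [show ((-((n:ℤ)+1))).natAbs = n+1 by omega, pow_succ]
      ring
    rw [← e]
    exact h
  have h12 : HasSum (fun j : ℤ => (1/4:ℝ)^(j.natAbs) * (4/3)) (16/9 + 4/9) :=
    HasSum.of_nat_of_neg_add_one h1 h2
  rw [show (16/9 : ℝ) + 4/9 = 20/9 by norm_num] at h12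
  exact h12

lemma tail_sum_le (ω₁ t : ℝ) (ht : 0 ≤ t) (hω : 0 ≤ ω₁) (N : ℕ)
    (hN : 3*(2*ω₁*t) ≤ (N:ℝ)) :
    ∑' j : ↥((↑(Finset.Icc (-(N:ℤ)) N) : Set ℤ)ᶜ), |G ω₁ t (j:ℤ)| ≤ 3 := by
  have hmem : ∀ j : ↥((↑(Finset.Icc (-(N:ℤ)) N) : Set ℤ)ᶜ), N < (j:ℤ).natAbs := by
    intro j
    have hj := j.2
    simp only [Set.mem_compl_iff, Finset.coe_Icc, Set.mem_Icc, not_and_or, not_le] at hj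
    omega
  have hgs : Summable (fun j : ℤ => (1/4:ℝ)^(j.natAbs) * (4/3)) := hasSum_absgeom.summable
  calc ∑' j : ↥((↑(Finset.Icc (-(N:ℤ)) N) : Set ℤ)ᶜ), |G ω₁ t (j:ℤ)|
      ≤ ∑' j : ↥((↑(Finset.Icc (-(N:ℤ)) N) : Set ℤ)ᶜ), (1/4:ℝ)^((j:ℤ).natAbs) * (4/3) := by
        apply Summable.tsum_le_tsum ?_ ((summable_abs_G ω₁ t ht hω).subtype _) (hgs.subtype _)
        intro j
        apply abs_G_tail ω₁ t ht hω (j:ℤ) (by have := hmem j; omega)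
        calc 3*(2*ω₁*t) ≤ (N:ℝ) := hN
          _ ≤ ((j:ℤ).natAbs : ℝ) := by exact_mod_cast Nat.cast_le.2 (le_of_lt (hmem j))
    _ ≤ 20/9 := by
        have hsplit := Summable.sum_add_tsum_compl (s := Finset.Icc (-(N:ℤ)) N) hgs
        have hpos : (0:ℝ) ≤ ∑ j ∈ Finset.Icc (-(N:ℤ)) N, (1/4:ℝ)^(j.natAbs) * (4/3) :=
          Finset.sum_nonneg (fun j _ => by positivity)
        have := hasSum_absgeom.tsum_eq
        linarith [hsplit, this.le, this.ge]
    _ ≤ 3 := by norm_num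

lemma middle_sum_le (ω₁ t : ℝ) (ht : 0 ≤ t) (hω : 0 ≤ ω₁) (N : ℕ) :
    ∑ j ∈ Finset.Icc (-(N:ℤ)) N, |G ω₁ t j| ≤ Real.sqrt (2*(N:ℝ)+1) := by
  have hCS := Finset.sum_mul_sq_le_sq_mul_sq (Finset.Icc (-(N:ℤ)) N)
    (fun _ => (1:ℝ)) (fun j => |G ω₁ t j|)
  simp only [one_mul, one_pow] at hCS
  have hcard : ((Finset.Icc (-(N:ℤ)) N).card : ℝ) = 2*(N:ℝ)+1 := by
    rw [Int.card_Icc, show ((N:ℤ) + 1 - -(N:ℤ)) = ((2*N+1 : ℕ) : ℤ) by push_cast; ring,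
      Int.toNat_natCast]
    push_cast
    ring
  have hsq : ∑ j ∈ Finset.Icc (-(N:ℤ)) N, |G ω₁ t j|^2 ≤ 1 := by
    have : ∀ j ∈ Finset.Icc (-(N:ℤ)) N, |G ω₁ t j|^2 = (G ω₁ t j)^2 :=
      fun j _ => sq_abs _
    rw [Finset.sum_congr rfl this]
    exact bessel ω₁ t ht hω _
  have hsum1 : ∑ j ∈ Finset.Icc (-(N:ℤ)) N, (1:ℝ) = ((Finset.Icc (-(N:ℤ)) N).card : ℝ) := by
    rw [Finset.sum_const, nsmul_eq_mul, mul_one]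
  have hnn : (0:ℝ) ≤ ∑ j ∈ Finset.Icc (-(N:ℤ)) N, |G ω₁ t j| :=
    Finset.sum_nonneg (fun j _ => abs_nonneg _)
  have hb : (∑ j ∈ Finset.Icc (-(N:ℤ)) N, |G ω₁ t j|)^2 ≤ 2*(N:ℝ)+1 := by
    calc (∑ j ∈ Finset.Icc (-(N:ℤ)) N, |G ω₁ t j|)^2
        ≤ (∑ j ∈ Finset.Icc (-(N:ℤ)) N, (1:ℝ)) * ∑ j ∈ Finset.Icc (-(N:ℤ)) N, |G ω₁ t j|^2 := hCS
      _ ≤ (2*(N:ℝ)+1) * 1 := by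
          rw [hsum1, hcard]
          apply mul_le_mul_of_nonneg_left hsq (by positivity)
      _ = 2*(N:ℝ)+1 := mul_one _
  calc ∑ j ∈ Finset.Icc (-(N:ℤ)) N, |G ω₁ t j|
      = Real.sqrt ((∑ j ∈ Finset.Icc (-(N:ℤ)) N, |G ω₁ t j|)^2) := (Real.sqrt_sq hnn).symm
    _ ≤ Real.sqrt (2*(N:ℝ)+1) := Real.sqrt_le_sqrt hb

lemma small_t (ω₁ t : ℝ) (ht : 0 ≤ t) (ht1 : t ≤ 1) (hω : 0 ≤ ω₁) :
    ∑' k : ℕ, (2*ω₁*t)^(2*k)/(Nat.factorial (2*k))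
      ≤ 1 + Real.sqrt t * ∑' k : ℕ, (2*ω₁)^(2*(k+1))/(Nat.factorial (2*(k+1))) := by
  have hsum : Summable (fun k : ℕ => (2*ω₁*t)^(2*k)/(Nat.factorial (2*k))) :=
    summable_sq (2*ω₁*t) (by positivity)
  have hKsum : Summable (fun k : ℕ => (2*ω₁)^(2*(k+1))/((Nat.factorial (2*(k+1))):ℝ)) :=
    (summable_sq (2*ω₁) (by positivity)).comp_injective (add_left_injective 1)
  have hs1 : Summable (fun k : ℕ => (2*ω₁*t)^(2*(k+1))/((Nat.factorial (2*(k+1))):ℝ)) :=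
    hsum.comp_injective (add_left_injective 1)
  have htsq : t ≤ Real.sqrt t := by
    conv_lhs => rw [← Real.mul_self_sqrt ht]
    calc Real.sqrt t * Real.sqrt t ≤ Real.sqrt t * 1 :=
      mul_le_mul_of_nonneg_left (Real.sqrt_le_one.mpr ht1) (Real.sqrt_nonneg t)
    _ = Real.sqrt t := mul_one _
  rw [Summable.tsum_eq_zero_add hsum]
  have h0 : (2*ω₁*t)^(2*0)/((Nat.factorial (2*0)):ℝ) = 1 := by norm_num
  rw [h0]
  apply add_le_add le_rfl
  have hterm : ∀ k : ℕ, (2*ω₁*t)^(2*(k+1))/((Nat.factorial (2*(k+1))):ℝ)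
      ≤ Real.sqrt t * ((2*ω₁)^(2*(k+1))/((Nat.factorial (2*(k+1))):ℝ)) := by
    intro k
    have hp : t^(2*(k+1)) ≤ Real.sqrt t := by
      calc t^(2*(k+1)) ≤ t^1 := pow_le_pow_of_le_one ht ht1 (by omega)
        _ = t := pow_one t
        _ ≤ Real.sqrt t := htsq
    calc (2*ω₁*t)^(2*(k+1))/((Nat.factorial (2*(k+1))):ℝ)
        = (2*ω₁)^(2*(k+1)) * t^(2*(k+1))/((Nat.factorial (2*(k+1))):ℝ) := by
          rw [mul_pow]
      _ ≤ (2*ω₁)^(2*(k+1)) * Real.sqrt t/((Nat.factorial (2*(k+1))):ℝ) := by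
          gcongr
      _ = Real.sqrt t * ((2*ω₁)^(2*(k+1))/((Nat.factorial (2*(k+1))):ℝ)) := by
          ring
  calc ∑' k : ℕ, (2*ω₁*t)^(2*(k+1))/((Nat.factorial (2*(k+1))):ℝ)
      ≤ ∑' k : ℕ, Real.sqrt t * ((2*ω₁)^(2*(k+1))/((Nat.factorial (2*(k+1))):ℝ)) :=
        Summable.tsum_le_tsum hterm hs1 (hKsum.mul_left _)
    _ = Real.sqrt t * ∑' k : ℕ, (2*ω₁)^(2*(k+1))/((Nat.factorial (2*(k+1))):ℝ) :=
        tsum_mul_left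

end Stmt11

theorem stmt11 (ω₁ : ℝ) (hω : 0 < ω₁)
    (V : lp (fun _ : ℤ => ℝ) ⊤ →L[ℝ] lp (fun _ : ℤ => ℝ) ⊤)
    (hV : ∀ (q : lp (fun _ : ℤ => ℝ) ⊤) (k : ℤ),
      (V q : ℤ → ℝ) k = -ω₁^2 * ((q : ℤ → ℝ) (k+1) - 2 * (q : ℤ → ℝ) k + (q : ℤ → ℝ) (k-1))) :
    ∃ b > (0:ℝ), ∀ t ≥ (0:ℝ),
      ‖∑' k : ℕ, (((-1)^k * t^(2*k) / (Nat.factorial (2*k)) : ℝ)) • V^k‖ ≤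
        b * Real.sqrt t + 1 := by
  have hω0 : 0 ≤ ω₁ := hω.le
  have hVn : ‖V‖ ≤ 4*ω₁^2 := Stmt11.norm_V_le ω₁ V hV
  set K : ℝ := ∑' k : ℕ, (2*ω₁)^(2*(k+1))/((Nat.factorial (2*(k+1))):ℝ) with hKdef
  have hK0 : 0 ≤ K := tsum_nonneg (fun k => by positivity)
  have hA0 : 0 ≤ Real.sqrt (12*ω₁+3) := Real.sqrt_nonneg _
  refine ⟨K + Real.sqrt (12*ω₁+3) + 3, by positivity, ?_⟩
  intro t ht
  have hE : (fun k : ℕ => (((-1)^k * t^(2*k) / (Nat.factorial (2*k)) : ℝ)) • V^k)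
      = fun k : ℕ => Stmt11.coef t k • V^k := rfl
  rw [hE]
  rcases le_or_gt t 1 with ht1 | ht1
  · have h1 := Stmt11.opnorm_le_series ω₁ t ht hω0 V hVn
    have h2 := Stmt11.small_t ω₁ t ht ht1 hω0
    have h3 : Real.sqrt t * K ≤ Real.sqrt t * (K + Real.sqrt (12*ω₁+3) + 3) :=
      mul_le_mul_of_nonneg_left (by linarith) (Real.sqrt_nonneg t)
    calc ‖∑' k : ℕ, Stmt11.coef t k • V^k‖
        ≤ ∑' k : ℕ, (2*ω₁*t)^(2*k)/(Nat.factorial (2*k)) := h1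
      _ ≤ 1 + Real.sqrt t * K := h2
      _ ≤ (K + Real.sqrt (12*ω₁+3) + 3) * Real.sqrt t + 1 := by
          rw [mul_comm (K + Real.sqrt (12*ω₁+3) + 3) (Real.sqrt t)]
          linarith
  · set N : ℕ := ⌈6*ω₁*t⌉₊ with hNdef
    have hN6 : 6*ω₁*t ≤ (N:ℝ) := Nat.le_ceil _
    have hNle : (N:ℝ) ≤ 6*ω₁*t + 1 := (Nat.ceil_lt_add_one (by positivity)).le
    have h3x : 3*(2*ω₁*t) ≤ (N:ℝ) := by linarith
    have hs1 : (1:ℝ) ≤ Real.sqrt t := by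
      rw [show (1:ℝ) = Real.sqrt 1 by rw [Real.sqrt_one]]
      exact Real.sqrt_le_sqrt ht1.le
    have hsplit := Summable.sum_add_tsum_compl (s := Finset.Icc (-(N:ℤ)) N)
      (Stmt11.summable_abs_G ω₁ t ht hω0)
    have hmid := Stmt11.middle_sum_le ω₁ t ht hω0 N
    have htail := Stmt11.tail_sum_le ω₁ t ht hω0 N h3x
    have hsqb : Real.sqrt (2*(N:ℝ)+1) ≤ Real.sqrt (12*ω₁+3) * Real.sqrt t := by
      rw [← Real.sqrt_mul (by positivity) t]
      apply Real.sqrt_le_sqrt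
      nlinarith
    have hl1 : ∑' j : ℤ, |Stmt11.G ω₁ t j| ≤ Real.sqrt (12*ω₁+3) * Real.sqrt t + 3 := by
      rw [← hsplit]
      have := add_le_add hmid htail
      linarith [le_trans (add_le_add hmid htail) (by linarith [hsqb] : Real.sqrt (2*(N:ℝ)+1) + 3 ≤ Real.sqrt (12*ω₁+3) * Real.sqrt t + 3)]
    calc ‖∑' k : ℕ, Stmt11.coef t k • V^k‖
        ≤ ∑' j : ℤ, |Stmt11.G ω₁ t j| := Stmt11.opnorm_le_l1 ω₁ t ht hω0 V hV hVn
      _ ≤ Real.sqrt (12*ω₁+3) * Real.sqrt t + 3 := hl1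
      _ ≤ (K + Real.sqrt (12*ω₁+3) + 3) * Real.sqrt t + 1 := by nlinarith
end
end
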